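/- Let μ be a probability measure on V, G ⊆ V measurable with μ(G) = p, and fix k with 0 ≤ k ≤ N-1 and β ∈ (0,1). If p < t*(k,β), where t*(k,β) is the unique solution in (0,1) of (1-β)/N = ∑_{i=0}^{k} C(N,i)(1-t)^i t^{N-i} (with t*(0,β) = (1-β)^{1/N}), then the μ^N-probability that at most k of the N i.i.d. samples fall outside G is strictly less than (1-β)/N. -/

import Mathlib

open MeasureTheory Set Finset

/-- The cumulative distribution function of a Binomial(N, 1-t) random variable at k. -/
noncomputable def binCDF (N k : ℕ) (t : ℝ) : ℝ :=
  ∑ i ∈ Finset.range (k + 1), (N.choose i : ℝ) * (1 - t) ^ i * t ^ (N - i)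

lemma binCDF_hasDerivAt (N k : ℕ) (hk : k < N) (t : ℝ) :
    HasDerivAt (binCDF N k)
      (((N - k : ℕ) : ℝ) * (N.choose k : ℝ) * (1 - t) ^ k * t ^ (N - k - 1)) t := by
  induction k with
  | zero =>
      have h0 : binCDF N 0 = fun x : ℝ => x ^ N := by
        funext x; simp [binCDF]
      rw [h0]
      simpa using (hasDerivAt_pow N t)
  | succ k ih =>
      have hkN : k < N := Nat.lt_of_succ_lt hk
      have h1 : binCDF N (k+1) = fun x : ℝ => binCDF N k x +
          (N.choose (k+1) : ℝ) * ((1 - x) ^ (k+1) * x ^ (N - (k+1))) := by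
        funext x; simp [binCDF, Finset.sum_range_succ, mul_assoc]
      rw [h1]
      have hA : HasDerivAt (fun x : ℝ => 1 - x) (-1) t := by
        simpa using ((hasDerivAt_id t).const_sub 1)
      have hB : HasDerivAt (fun x : ℝ => (1 - x) ^ (k+1))
          (-(((k:ℝ)+1) * (1 - t) ^ k)) t := by
        have := (hasDerivAt_pow (k+1) (1-t)).comp t hA
        simpa [Function.comp_def, mul_comm, mul_assoc] using this
      have hC : HasDerivAt (fun x : ℝ => x ^ (N - (k+1)))
          (((N - (k+1) : ℕ) : ℝ) * t ^ (N - (k+1) - 1)) t := by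
        simpa using hasDerivAt_pow (N - (k+1)) t
      have hterm := ((hB.mul hC).const_mul ((N.choose (k+1) : ℝ)))
      have hsum := (ih hkN).add hterm
      convert hsum using 1
      · exact rfl
      · exact rfl
      · exact rfl
      have hch : ((N.choose (k+1) : ℝ)) * ((k:ℝ)+1) = (N.choose k : ℝ) * ((N - k : ℕ) : ℝ) := by
        have := Nat.choose_succ_right_eq N k
        exact_mod_cast this
      have e1 : N - k - 1 = N - (k+1) := by omega
      rw [e1]
      linear_combination ((1-t)^k * t^(N-(k+1))) * hch

lemma binCDF_strictMonoOn (N k : ℕ) (hk : k < N) :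
    StrictMonoOn (binCDF N k) (Set.Icc (0:ℝ) 1) := by
  apply strictMonoOn_of_deriv_pos (convex_Icc 0 1)
  · exact fun x _ => ((binCDF_hasDerivAt N k hk x).differentiableAt.continuousAt).continuousWithinAt
  · intro x hx
    rw [interior_Icc] at hx
    rw [(binCDF_hasDerivAt N k hk x).deriv]
    have h1 : (0:ℝ) < ((N - k : ℕ) : ℝ) := by
      have : 0 < N - k := by omega
      exact_mod_cast this
    have h2 : (0:ℝ) < (N.choose k : ℝ) := by
      exact_mod_cast Nat.choose_pos hk.le
    have h3 : (0:ℝ) < (1 - x) ^ k := pow_pos (by linarith [hx.2]) k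
    have h4 : (0:ℝ) < x ^ (N - k - 1) := pow_pos hx.1 _
    positivity

lemma prob_count_le {V : Type*} [MeasurableSpace V] (μ : Measure V) [IsProbabilityMeasure μ]
    (N : ℕ) (G : Set V) (hG : MeasurableSet G) (k : ℕ) :
    (Measure.pi fun _ : Fin N => μ) {ω | Nat.card {i : Fin N // ω i ∉ G} ≤ k}
      = ∑ i ∈ Finset.range (k+1), (N.choose i) * ((μ Gᶜ) ^ i * (μ G) ^ (N - i)) := by
  classical
  set 𝒮 : Finset (Finset (Fin N)) := Finset.univ.filter (fun S => S.card ≤ k) with h𝒮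
  have hcard : ∀ (ω : Fin N → V), Nat.card {i : Fin N // ω i ∉ G}
      = (Finset.univ.filter (fun i => ω i ∉ G)).card := by
    intro ω
    rw [Nat.card_eq_fintype_card, Fintype.card_subtype]
  have hset : {ω : Fin N → V | Nat.card {i : Fin N // ω i ∉ G} ≤ k}
      = ⋃ S ∈ 𝒮, Set.pi Set.univ (fun i => if i ∈ S then Gᶜ else G) := by
    ext ω
    simp only [Set.mem_setOf_eq, Set.mem_iUnion, Set.mem_pi, Set.mem_univ, forall_true_left,
      h𝒮, Finset.mem_filter, Finset.mem_univ, true_and, exists_prop]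
    constructor
    · intro h
      refine ⟨Finset.univ.filter (fun i => ω i ∉ G), ?_, ?_⟩
      · rw [hcard] at h; exact h
      · intro i
        by_cases hi : ω i ∈ G <;> simp [hi]
    · rintro ⟨S, hS, hω⟩
      rw [hcard]
      have : Finset.univ.filter (fun i => ω i ∉ G) = S := by
        ext i
        simp only [Finset.mem_filter, Finset.mem_univ, true_and]
        have := hω i
        by_cases hi : i ∈ S <;> simp [hi] at this ⊢ <;> tauto
      rw [this]; exact hS
  rw [hset]
  rw [measure_biUnion_finset]
  · have hpi : ∀ S ∈ 𝒮, (Measure.pi fun _ : Fin N => μ)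
        (Set.pi Set.univ (fun i => if i ∈ S then Gᶜ else G))
        = (μ Gᶜ) ^ S.card * (μ G) ^ (N - S.card) := by
      intro S _
      rw [Measure.pi_pi]
      have : ∀ i : Fin N, μ (if i ∈ S then Gᶜ else G) = if i ∈ S then μ Gᶜ else μ G := by
        intro i; by_cases hi : i ∈ S <;> simp [hi]
      simp_rw [this]
      rw [Finset.prod_ite, Finset.prod_const, Finset.prod_const]
      congr 1
      · congr 1
        simp
      · congr 1
        have : Finset.univ.filter (fun i : Fin N => ¬ i ∈ S) = Finset.univ \ S := by
          ext i; simp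
        rw [this, Finset.card_sdiff_of_subset (Finset.subset_univ S)]
        simp
    rw [Finset.sum_congr rfl hpi]
    have hS2 : 𝒮 = (Finset.range (k+1)).biUnion (fun i => Finset.powersetCard i Finset.univ) := by
      ext S
      simp [h𝒮, Finset.mem_powersetCard, Nat.lt_succ_iff, Finset.subset_univ, eq_comm]
    rw [hS2, Finset.sum_biUnion]
    · apply Finset.sum_congr rfl
      intro i hi
      have : ∀ S ∈ Finset.powersetCard i (Finset.univ : Finset (Fin N)),
          (μ Gᶜ) ^ S.card * (μ G) ^ (N - S.card) = (μ Gᶜ) ^ i * (μ G) ^ (N - i) := by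
        intro S hS
        rw [(Finset.mem_powersetCard.mp hS).2]
      rw [Finset.sum_congr rfl this, Finset.sum_const, Finset.card_powersetCard]
      simp [nsmul_eq_mul]
    · intro a ha b hb hab
      simp only [Function.onFun]
      rw [Finset.disjoint_left]
      intro S h1 h2
      rw [Finset.mem_powersetCard] at h1 h2
      exact hab (h1.2 ▸ h2.2 ▸ rfl)
  · intro S hS T hT hST
    simp only [Function.onFun]
    rw [Set.disjoint_left]
    intro ω hωS hωT
    apply hST
    have key : ∀ (S' : Finset (Fin N)), ω ∈ Set.pi Set.univ (fun i => if i ∈ S' then Gᶜ else G) →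
        S' = Finset.univ.filter (fun i => ω i ∉ G) := by
      intro S' hω
      ext i
      have := hω i (Set.mem_univ i)
      simp only [Finset.mem_filter, Finset.mem_univ, true_and]
      by_cases hi : i ∈ S' <;> simp [hi] at this ⊢ <;> tauto
    rw [key S hωS, key T hωT]
  · intro S _
    exact MeasurableSet.univ_pi (fun i => by by_cases hi : i ∈ S <;> simp [hi, hG, hG.compl])

theorem stmt_15 {V : Type*} [MeasurableSpace V] (μ : Measure V) [IsProbabilityMeasure μ]
    (N : ℕ) (hN : 1 ≤ N) (G : Set V) (hG : MeasurableSet G)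
    (k : ℕ) (hk : k ≤ N - 1) (β : ℝ) (hβ : β ∈ Set.Ioo (0 : ℝ) 1)
    (t : ℝ) (htm : t ∈ Set.Ioo (0 : ℝ) 1) (hteq : (1 - β) / N = binCDF N k t)
    (p : ℝ) (hp : p = (μ G).toReal) (hpt : p < t) :
    (Measure.pi fun _ : Fin N => μ) {ω | Nat.card {i : Fin N // ω i ∉ G} ≤ k} <
      ENNReal.ofReal ((1 - β) / N) := by
  have hkN : k < N := by omega
  have hp0 : 0 ≤ p := by rw [hp]; exact ENNReal.toReal_nonneg
  have hp1 : p ≤ 1 := by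
    rw [hp]
    have := (ENNReal.toReal_le_toReal (measure_ne_top μ G) ENNReal.one_ne_top).mpr prob_le_one
    simpa using this
  have hrG : μ G = ENNReal.ofReal p := by
    rw [hp, ENNReal.ofReal_toReal (measure_ne_top μ G)]
  have hqG : μ Gᶜ = ENNReal.ofReal (1 - p) := by
    rw [measure_compl hG (measure_ne_top μ G), measure_univ, hrG,
      ENNReal.ofReal_sub 1 hp0, ENNReal.ofReal_one]
  rw [prob_count_le μ N G hG k]
  have hterm : ∀ i ∈ Finset.range (k+1),
      (N.choose i : ENNReal) * ((μ Gᶜ) ^ i * (μ G) ^ (N - i))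
        = ENNReal.ofReal ((N.choose i : ℝ) * ((1 - p) ^ i * p ^ (N - i))) := by
    intro i _
    rw [hrG, hqG, ← ENNReal.ofReal_pow (by linarith), ← ENNReal.ofReal_pow hp0,
      ← ENNReal.ofReal_mul (pow_nonneg (by linarith) i), ← ENNReal.ofReal_natCast (N.choose i),
      ← ENNReal.ofReal_mul (Nat.cast_nonneg _)]
  rw [Finset.sum_congr rfl hterm, ← ENNReal.ofReal_sum_of_nonneg (fun i _ =>
    mul_nonneg (Nat.cast_nonneg _) (mul_nonneg (pow_nonneg (by linarith) _) (pow_nonneg hp0 _)))]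
  have hbp : ∑ i ∈ Finset.range (k+1), (N.choose i : ℝ) * ((1 - p) ^ i * p ^ (N - i))
      = binCDF N k p := by
    unfold binCDF
    apply Finset.sum_congr rfl
    intro i _
    ring
  rw [hbp]
  have hNpos : (0:ℝ) < N := by exact_mod_cast hN
  have hpos : 0 < (1 - β) / N := div_pos (by linarith [hβ.2]) hNpos
  rw [ENNReal.ofReal_lt_ofReal_iff hpos, hteq]
  exact binCDF_strictMonoOn N k hkN ⟨hp0, hp1⟩ ⟨htm.1.le, htm.2.le⟩ hpt
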